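/- Let p be a prime, P a finite group with |P| = p^k·t, gcd(p,t)=1, and t' a divisor of t. Then the sum of μ(P') over all subgroups P' of P whose order is divisible by t' and divides p^k·t' is divisible by p^k. -/

import Mathlib

open Finset
open scoped Pointwise Classical

set_option linter.unusedSectionVars false

namespace HIOAux

variable {G : Type*} [Group G]

section Chains
variable [Fintype (Subgroup G)]

/-- chains (as finsets) inside a given finset of subgroups -/
noncomputable def chainsIn (A : Finset (Subgroup G)) : Finset (Finset (Subgroup G)) :=
  A.powerset.filter fun σ => IsChain (· ≤ ·) (σ : Set (Subgroup G))

lemma mem_chainsIn {A : Finset (Subgroup G)} {σ : Finset (Subgroup G)} :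
    σ ∈ chainsIn A ↔ σ ⊆ A ∧ IsChain (· ≤ ·) (σ : Set (Subgroup G)) := by
  simp [chainsIn]

lemma empty_mem_chainsIn {A : Finset (Subgroup G)} : ∅ ∈ chainsIn A := by
  simp [mem_chainsIn, IsChain.empty]

lemma chain_exists_top {A : Finset (Subgroup G)} {σ : Finset (Subgroup G)}
    (hσ : σ ∈ chainsIn A) (hne : σ.Nonempty) :
    σ.sup id ∈ σ ∧ ∀ x ∈ σ, x ≤ σ.sup id := by
  obtain ⟨m, hm, hmax⟩ := σ.exists_maximal hne
  have hall : ∀ x ∈ σ, x ≤ m := by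
    intro x hx
    rcases eq_or_ne x m with rfl | hxm
    · exact le_rfl
    · rcases (mem_chainsIn.mp hσ).2 hx hm hxm with h | h
      · exact h
      · rcases eq_or_lt_of_le h with rfl | h'
        · exact le_rfl
        · exact absurd (h'.trans_le (hmax hx h'.le)) (lt_irrefl _)
  have hsup : σ.sup id = m :=
    le_antisymm (Finset.sup_le fun x hx => hall x hx) (Finset.le_sup (f := id) hm)
  rw [hsup]
  exact ⟨hm, hall⟩

/-- generic sign-reversing toggle involution -/
lemma sum_chainsIn_eq_zero {A : Finset (Subgroup G)} (e : Finset (Subgroup G) → Subgroup G)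
    (he1 : ∀ σ ∈ chainsIn A, e σ ∈ A)
    (he2 : ∀ σ ∈ chainsIn A, ∀ x ∈ σ, x ≤ e σ ∨ e σ ≤ x)
    (he3 : ∀ σ ∈ chainsIn A, e (σ.erase (e σ)) = e σ)
    (he4 : ∀ σ ∈ chainsIn A, e (insert (e σ) σ) = e σ) :
    ∑ σ ∈ chainsIn A, (-1 : ℤ) ^ σ.card = 0 := by
  have g_mem : ∀ σ ∈ chainsIn A,
      (if e σ ∈ σ then σ.erase (e σ) else insert (e σ) σ) ∈ chainsIn A := by
    intro σ hσ
    obtain ⟨hsub, hc⟩ := mem_chainsIn.mp hσ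
    by_cases h : e σ ∈ σ
    · simp only [h, if_true]
      exact mem_chainsIn.mpr ⟨(Finset.erase_subset _ _).trans hsub,
        hc.mono (Finset.coe_subset.mpr (Finset.erase_subset _ _))⟩
    · simp only [h, if_false]
      refine mem_chainsIn.mpr ⟨Finset.insert_subset (he1 σ hσ) hsub, ?_⟩
      rw [Finset.coe_insert]
      exact hc.insert fun b hb _ => (he2 σ hσ b hb).symm
  refine Finset.sum_involution (fun σ _ => if e σ ∈ σ then σ.erase (e σ) else insert (e σ) σ)
    ?_ ?_ g_mem ?_
  · intro σ hσ
    by_cases h : e σ ∈ σ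
    · simp only [h, if_true, Finset.card_erase_of_mem h]
      have hpos : 0 < σ.card := Finset.card_pos.mpr ⟨_, h⟩
      obtain ⟨m, hm⟩ : ∃ m, σ.card = m + 1 := ⟨σ.card - 1, (Nat.succ_pred_eq_of_pos hpos).symm⟩
      rw [hm, Nat.add_sub_cancel, pow_succ]; ring
    · simp only [h, if_false, Finset.card_insert_of_notMem h, pow_succ]; ring
  · intro σ hσ _
    by_cases h : e σ ∈ σ
    · simp only [h, if_true]
      intro heq
      exact (Finset.erase_eq_self.mp heq) h
    · simp only [h, if_false]
      intro heq
      exact h (Finset.insert_eq_self.mp heq)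
  · intro σ hσ
    by_cases h : e σ ∈ σ
    · simp only [h, if_true, he3 σ hσ, Finset.notMem_erase, if_false]
      exact Finset.insert_erase h
    · simp only [h, if_false, he4 σ hσ, Finset.mem_insert_self, if_true]
      exact Finset.erase_insert h

lemma sum_chainsIn_eq_zero_of_top {A : Finset (Subgroup G)} {Q : Subgroup G}
    (hQ : Q ∈ A) (hle : ∀ K ∈ A, K ≤ Q) :
    ∑ σ ∈ chainsIn A, (-1 : ℤ) ^ σ.card = 0 := by
  refine sum_chainsIn_eq_zero (fun _ => Q) (fun _ _ => hQ) ?_ (fun _ _ => rfl) (fun _ _ => rfl)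
  intro σ hσ x hx
  exact Or.inl (hle x ((mem_chainsIn.mp hσ).1 hx))

end Chains

section Nu
variable [Fintype (Subgroup G)]

noncomputable def below (H : Subgroup G) : Finset (Subgroup G) :=
  univ.filter fun K => ⊥ < K ∧ K ≤ H

noncomputable def nu (H : Subgroup G) : ℤ :=
  ∑ σ ∈ (chainsIn (below H)).filter fun σ => H ∈ σ ∨ H = ⊥, (-1 : ℤ) ^ σ.card

lemma nu_bot : nu (⊥ : Subgroup G) = 1 := by
  have hbe : below (⊥ : Subgroup G) = ∅ := by
    ext K
    simp only [below, mem_filter, mem_univ, true_and, Finset.notMem_empty, iff_false, not_and]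
    intro h1 h2
    exact absurd (h1.trans_le h2) (lt_irrefl _)
  have hset : (chainsIn (below (⊥ : Subgroup G))).filter
      (fun σ => (⊥ : Subgroup G) ∈ σ ∨ (⊥ : Subgroup G) = ⊥) = {∅} := by
    rw [hbe]
    ext σ
    constructor
    · intro hσ
      obtain ⟨h1, -⟩ := Finset.mem_filter.mp hσ
      obtain ⟨h2, -⟩ := mem_chainsIn.mp h1
      simpa using Finset.subset_empty.mp h2
    · intro hσ
      rw [Finset.mem_singleton] at hσ
      subst hσ
      exact Finset.mem_filter.mpr ⟨empty_mem_chainsIn, Or.inr rfl⟩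
  rw [nu, hset]
  simp

/-- grouping chains by their top element -/
lemma sum_nu_eq (A : Finset (Subgroup G)) (hbot : ∀ H ∈ A, ⊥ < H)
    (hdc : ∀ H ∈ A, ∀ K, ⊥ < K → K ≤ H → K ∈ A) :
    ∑ H ∈ A, nu H = ∑ σ ∈ (chainsIn A).filter (fun σ => σ.Nonempty), (-1 : ℤ) ^ σ.card := by
  have hmap : ∀ σ ∈ (chainsIn A).filter (fun σ => σ.Nonempty), σ.sup id ∈ A := by
    intro σ hσ
    obtain ⟨hσ', hne⟩ := Finset.mem_filter.mp hσ
    exact (mem_chainsIn.mp hσ').1 (chain_exists_top hσ' hne).1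
  rw [← Finset.sum_fiberwise_of_maps_to hmap]
  refine Finset.sum_congr rfl fun H hH => ?_
  have hHne : H ≠ ⊥ := (hbot H hH).ne'
  rw [nu]
  refine Finset.sum_congr ?_ (fun _ _ => rfl)
  ext σ
  constructor
  · intro hσ
    obtain ⟨hσ1, hσ2⟩ := Finset.mem_filter.mp hσ
    obtain ⟨hsub, hc⟩ := mem_chainsIn.mp hσ1
    have hHσ : H ∈ σ := hσ2.resolve_right hHne
    have hsub' : σ ⊆ A := by
      intro K hK
      have h' := hsub hK
      simp only [below, mem_filter, mem_univ, true_and] at h'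
      exact hdc H hH K h'.1 h'.2
    have hle : ∀ K ∈ σ, K ≤ H := by
      intro K hK
      have h' := hsub hK
      simp only [below, mem_filter, mem_univ, true_and] at h'
      exact h'.2
    refine Finset.mem_filter.mpr ⟨Finset.mem_filter.mpr
      ⟨mem_chainsIn.mpr ⟨hsub', hc⟩, ⟨H, hHσ⟩⟩, ?_⟩
    exact le_antisymm (Finset.sup_le hle) (Finset.le_sup (f := id) hHσ)
  · intro hσ
    obtain ⟨hσ1, hsup⟩ := Finset.mem_filter.mp hσ
    obtain ⟨hσ2, hne⟩ := Finset.mem_filter.mp hσ1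
    obtain ⟨hmem, hle⟩ := chain_exists_top hσ2 hne
    rw [hsup] at hmem hle
    obtain ⟨hsub, hc⟩ := mem_chainsIn.mp hσ2
    refine Finset.mem_filter.mpr ⟨mem_chainsIn.mpr ⟨?_, hc⟩, Or.inl hmem⟩
    intro K hK
    simp only [below, mem_filter, mem_univ, true_and]
    exact ⟨hbot K (hsub hK), hle K hK⟩

lemma sum_nu_le_eq_zero {Q : Subgroup G} (hQ : Q ≠ ⊥) :
    ∑ H ∈ univ.filter (· ≤ Q), nu H = 0 := by
  have hsplit : univ.filter (· ≤ (Q : Subgroup G)) = insert ⊥ (below Q) := by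
    ext K
    simp only [mem_filter, mem_univ, true_and, Finset.mem_insert, below, bot_lt_iff_ne_bot]
    constructor
    · intro h
      rcases eq_or_ne K ⊥ with rfl | hK
      · exact Or.inl rfl
      · exact Or.inr ⟨hK, h⟩
    · rintro (rfl | ⟨-, h⟩)
      · exact bot_le
      · exact h
  have hbotnot : (⊥ : Subgroup G) ∉ below Q := by
    simp [below]
  rw [hsplit, Finset.sum_insert hbotnot, nu_bot]
  have hgroup := sum_nu_eq (below Q) (fun H hH => by simpa [below] using (Finset.mem_filter.mp hH).2.1)
    (fun H hH K hK1 hK2 => by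
      simp only [below, mem_filter, mem_univ, true_and] at hH ⊢
      exact ⟨hK1, hK2.trans hH.2⟩)
  rw [hgroup]
  have htot : ∑ σ ∈ chainsIn (below Q), (-1 : ℤ) ^ σ.card = 0 := by
    refine sum_chainsIn_eq_zero_of_top (Q := Q) ?_ ?_
    · simp [below, bot_lt_iff_ne_bot, hQ]
    · intro K hK; simp only [below, mem_filter, mem_univ, true_and] at hK; exact hK.2
  have hsplit2 : chainsIn (below Q) = insert ∅ ((chainsIn (below Q)).filter (fun σ => σ.Nonempty)) := by
    ext σ
    simp only [Finset.mem_insert, Finset.mem_filter]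
    constructor
    · intro h
      rcases Finset.eq_empty_or_nonempty σ with rfl | hne
      · exact Or.inl rfl
      · exact Or.inr ⟨h, hne⟩
    · rintro (rfl | ⟨h, -⟩)
      · exact empty_mem_chainsIn
      · exact h
  rw [hsplit2, Finset.sum_insert (by simp)] at htot
  simp only [Finset.card_empty, pow_zero] at htot
  linarith

/-- Hall: the abstract Möbius function equals the chain-counting function -/
lemma mu_eq_nu [Finite G] (μ : Subgroup G → ℤ) (hbot : μ ⊥ = 1)
    (hrec : ∀ Q : Subgroup G, Q ≠ ⊥ → ∑ H ∈ univ.filter (· ≤ Q), μ H = 0) :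
    ∀ H, μ H = nu H := by
  intro H
  induction H using WellFoundedLT.induction with
  | ind H ih =>
    rcases eq_or_ne H ⊥ with rfl | hH
    · rw [hbot, nu_bot]
    · have h1 := hrec H hH
      have h2 := sum_nu_le_eq_zero hH
      have hsplit : univ.filter (· ≤ H) = insert H (univ.filter (· < H)) := by
        ext K
        simp only [mem_filter, mem_univ, true_and, Finset.mem_insert]
        constructor
        · intro h; rcases eq_or_lt_of_le h with rfl | h'
          · exact Or.inl rfl
          · exact Or.inr h'
        · rintro (rfl | h)
          exacts [le_rfl, le_of_lt h]
      have hHnot : H ∉ univ.filter (· < H) := by simp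
      rw [hsplit, Finset.sum_insert hHnot] at h1 h2
      have heq : ∑ K ∈ univ.filter (· < H), μ K = ∑ K ∈ univ.filter (· < H), nu K :=
        Finset.sum_congr rfl fun K hK => ih K (by simpa using hK)
      linarith

end Nu

end HIOAux
section Stage2

variable {G : Type*} [Group G]

/-- |y ⊔ Z| divides |y|·|Z| when Z normalizes y. -/
lemma card_sup_dvd_mul [Finite G] {y Z : Subgroup G} (hN : Z ≤ Subgroup.normalizer (y : Set G)) :
    Nat.card ↥(y ⊔ Z) ∣ Nat.card y * Nat.card Z := by
  set W : Subgroup G := y ⊔ Z with hW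
  have hyW : y ≤ W := le_sup_left
  have hZW : Z ≤ W := le_sup_right
  have hWN : W ≤ Subgroup.normalizer (y : Set G) := sup_le Subgroup.le_normalizer hN
  haveI hnorm : (y.subgroupOf W).Normal := by
    constructor
    intro x hx w
    rw [Subgroup.mem_subgroupOf] at hx ⊢
    have hw := Subgroup.mem_normalizer_iff.mp (hWN w.2) (x : G)
    simpa using hw.mp hx
  have hcardW : Nat.card ↥W = Nat.card (↥W ⧸ y.subgroupOf W) * Nat.card (y.subgroupOf W) :=
    Subgroup.card_eq_card_quotient_mul_card_subgroup _
  have hcardy : Nat.card (y.subgroupOf W) = Nat.card y :=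
    Nat.card_congr (Subgroup.subgroupOfEquivOfLe hyW).toEquiv
  have hsup' : y.subgroupOf W ⊔ Z.subgroupOf W = ⊤ := by
    rw [← Subgroup.subgroupOf_sup hyW hZW]
    rw [show y ⊔ Z = W from hW.symm, Subgroup.subgroupOf_self]
  set q : ↥W →* ↥W ⧸ y.subgroupOf W := QuotientGroup.mk' (y.subgroupOf W) with hq
  have hmapbot : (y.subgroupOf W).map q = ⊥ := by
    rw [Subgroup.map_eq_bot_iff, hq, QuotientGroup.ker_mk']
  have hmaptop : (Z.subgroupOf W).map q = ⊤ := by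
    have h2 : ((y.subgroupOf W) ⊔ (Z.subgroupOf W)).map q = ⊤ := by
      rw [hsup']
      rw [← MonoidHom.range_eq_map]
      exact MonoidHom.range_eq_top_of_surjective _ (QuotientGroup.mk'_surjective _)
    rwa [Subgroup.map_sup, hmapbot, bot_sup_eq] at h2
  have hsurj : Function.Surjective (q.comp (Z.subgroupOf W).subtype) := by
    intro x
    have hx : x ∈ (Z.subgroupOf W).map q := by rw [hmaptop]; trivial
    obtain ⟨z, hz, hzx⟩ := Subgroup.mem_map.mp hx
    exact ⟨⟨z, hz⟩, hzx⟩
  have hdvd : Nat.card (↥W ⧸ y.subgroupOf W) ∣ Nat.card Z := by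
    have h1 := Subgroup.card_dvd_of_surjective _ hsurj
    have h2 : Nat.card (Z.subgroupOf W) = Nat.card Z :=
      Nat.card_congr (Subgroup.subgroupOfEquivOfLe hZW).toEquiv
    rwa [h2] at h1
  rw [hcardW, hcardy, mul_comm]
  exact mul_dvd_mul dvd_rfl hdvd

/-- the arithmetic: if |y| ∣ p^k d, |Z| ∣ p^k, then |y ⊔ Z| ∣ p^k d. -/
lemma card_sup_arith [Finite G] {p k t d : ℕ} (hcard : Nat.card G = p ^ k * t)
    (hcop : Nat.Coprime p t) (hd : d ∣ t) {y Z : Subgroup G} (hN : Z ≤ Subgroup.normalizer (y : Set G))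
    (hy : Nat.card y ∣ p ^ k * d) (hZ : Nat.card Z ∣ p ^ k) :
    Nat.card ↥(y ⊔ Z) ∣ p ^ k * d := by
  have h1 : Nat.card ↥(y ⊔ Z) ∣ p ^ k * t := by
    rw [← hcard]; exact Subgroup.card_subgroup_dvd_card _
  have h2 : Nat.card ↥(y ⊔ Z) ∣ p ^ k * (d * p ^ k) := by
    calc Nat.card ↥(y ⊔ Z) ∣ Nat.card y * Nat.card Z := card_sup_dvd_mul hN
    _ ∣ (p ^ k * d) * p ^ k := mul_dvd_mul hy hZ
    _ = p ^ k * (d * p ^ k) := by ring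
  have hgcd : Nat.gcd (p ^ k * t) (p ^ k * (d * p ^ k)) = p ^ k * d := by
    rw [Nat.gcd_mul_left]
    congr 1
    have hco : Nat.Coprime (Nat.gcd t (d * p ^ k)) (p ^ k) :=
      Nat.Coprime.coprime_dvd_left (Nat.gcd_dvd_left _ _) (Nat.Coprime.pow_right k hcop.symm)
    exact Nat.dvd_antisymm
      (hco.dvd_of_dvd_mul_right (Nat.gcd_dvd_right _ _))
      (Nat.dvd_gcd hd (dvd_mul_right _ _))
  calc Nat.card ↥(y ⊔ Z) ∣ Nat.gcd (p ^ k * t) (p ^ k * (d * p ^ k)) := Nat.dvd_gcd h1 h2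
  _ = p ^ k * d := hgcd

end Stage2
section Stage3

variable {G : Type*} [Group G]

lemma mem_normalizer_of_smul_eq {c : ConjAct G} {H : Subgroup G} (h : c • H = H) :
    ConjAct.ofConjAct c ∈ Subgroup.normalizer (H : Set G) := by
  rw [Subgroup.mem_normalizer_iff]
  intro x
  constructor
  · intro hx
    have h2 := Subgroup.smul_mem_pointwise_smul x c H hx
    rw [h] at h2
    rwa [ConjAct.smul_def] at h2
  · intro hx
    have h2 : ConjAct.ofConjAct c * x * (ConjAct.ofConjAct c)⁻¹ ∈ c • H := by
      rw [h]; exact hx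
    rw [Subgroup.mem_pointwise_smul_iff_inv_smul_mem, ConjAct.smul_def] at h2
    simp only [map_inv, inv_inv] at h2
    group at h2
    exact h2

lemma smul_zpowers_self (c : ConjAct G) :
    c • Subgroup.zpowers (ConjAct.ofConjAct c) = Subgroup.zpowers (ConjAct.ofConjAct c) := by
  rw [Subgroup.pointwise_smul_def]
  erw [MonoidHom.map_zpowers]
  congr 1
  show c • (ConjAct.ofConjAct c) = ConjAct.ofConjAct c
  rw [ConjAct.smul_def]
  group

lemma card_smul_subgroup (c : ConjAct G) (H : Subgroup G) :
    Nat.card ↥(c • H) = Nat.card H :=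
  (Nat.card_congr (Subgroup.equivSMul c H).toEquiv).symm

lemma smul_eq_bot_iff {c : ConjAct G} {H : Subgroup G} : c • H = ⊥ ↔ H = ⊥ := by
  constructor
  · intro h
    have := congrArg (fun K => c⁻¹ • K) h
    simpa [inv_smul_smul, Subgroup.smul_bot] using this
  · rintro rfl; exact Subgroup.smul_bot c

lemma chi_eq_zero [Finite G] [Fintype (Subgroup G)] {p k t d : ℕ}
    (hcard : Nat.card G = p ^ k * t) (hcop : Nat.Coprime p t) (hd : d ∣ t)
    {c : ConjAct G} (hc1 : c ≠ 1)
    (hco : Nat.card (Subgroup.zpowers (ConjAct.ofConjAct c)) ∣ p ^ k) :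
    ∑ σ ∈ HIOAux.chainsIn (Finset.univ.filter fun H : Subgroup G =>
      (⊥ < H ∧ Nat.card H ∣ p ^ k * d) ∧ c • H = H), (-1 : ℤ) ^ σ.card = 0 := by
  set g : G := ConjAct.ofConjAct c with hgdef
  set Z : Subgroup G := Subgroup.zpowers g with hZdef
  have hg1 : g ≠ 1 := by
    simp only [hgdef, ne_eq]
    intro h
    exact hc1 (by simpa using congrArg ConjAct.toConjAct h)
  have hgZ : g ∈ Z := Subgroup.mem_zpowers g
  set A : Finset (Subgroup G) := Finset.univ.filter
    (fun H : Subgroup G => (⊥ < H ∧ Nat.card H ∣ p ^ k * d) ∧ c • H = H) with hA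
  have hmemA : ∀ {H : Subgroup G}, H ∈ A ↔ ((⊥ < H ∧ Nat.card H ∣ p ^ k * d) ∧ c • H = H) := by
    intro H; simp [hA]
  have hZA : Z ∈ A := by
    refine hmemA.mpr ⟨⟨?_, ?_⟩, smul_zpowers_self c⟩
    · rw [bot_lt_iff_ne_bot, hZdef]
      exact Subgroup.zpowers_ne_bot.mpr hg1
    · exact hco.trans (dvd_mul_right _ _)
  set B : Finset (Subgroup G) → Finset (Subgroup G) :=
    fun σ => σ.filter (fun K => g ∉ K) with hB
  set e : Finset (Subgroup G) → Subgroup G :=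
    fun σ => if h : (B σ).Nonempty then ((B σ).sup id) ⊔ Z else Z with he
  have hge : ∀ σ, g ∈ e σ := by
    intro σ
    simp only [he]
    split
    · exact Subgroup.mem_sup_right hgZ
    · exact hgZ
  have hBmem : ∀ {σ K}, K ∈ B σ ↔ K ∈ σ ∧ g ∉ K := by
    intro σ K; simp [hB]
  have hBchain : ∀ σ ∈ HIOAux.chainsIn A, B σ ∈ HIOAux.chainsIn A := by
    intro σ hσ
    obtain ⟨hsub, hc'⟩ := HIOAux.mem_chainsIn.mp hσ
    exact HIOAux.mem_chainsIn.mpr ⟨(Finset.filter_subset _ _).trans hsub,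
      hc'.mono (Finset.coe_subset.mpr (Finset.filter_subset _ _))⟩
  -- facts about the top of B σ
  have hYfact : ∀ σ ∈ HIOAux.chainsIn A, ∀ h : (B σ).Nonempty,
      (B σ).sup id ∈ B σ ∧ ∀ x ∈ B σ, x ≤ (B σ).sup id := by
    intro σ hσ h
    exact HIOAux.chain_exists_top (hBchain σ hσ) h
  have hBe : ∀ σ' σ, B σ' = B σ → e σ' = e σ := by
    intro σ' σ hh; simp only [he, hh]
  have he1 : ∀ σ ∈ HIOAux.chainsIn A, e σ ∈ A := by
    intro σ hσ
    simp only [he]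
    split
    case isTrue h =>
      obtain ⟨hy1, hy2⟩ := hYfact σ hσ h
      set y : Subgroup G := (B σ).sup id
      obtain ⟨hyσ, hgy⟩ := hBmem.mp hy1
      have hyA := hmemA.mp ((HIOAux.mem_chainsIn.mp hσ).1 hyσ)
      have hnorm : Z ≤ Subgroup.normalizer (y : Set G) :=
        Subgroup.zpowers_le.mpr (mem_normalizer_of_smul_eq hyA.2)
      refine hmemA.mpr ⟨⟨?_, ?_⟩, ?_⟩
      · exact lt_of_lt_of_le hyA.1.1 le_sup_left
      · exact card_sup_arith hcard hcop hd hnorm hyA.1.2 hco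
      · rw [Subgroup.smul_sup, hyA.2, hZdef, smul_zpowers_self]
    case isFalse h => exact hZA
  have he2 : ∀ σ ∈ HIOAux.chainsIn A, ∀ x ∈ σ, x ≤ e σ ∨ e σ ≤ x := by
    intro σ hσ x hx
    simp only [he]
    split
    case isTrue h =>
      obtain ⟨hy1, hy2⟩ := hYfact σ hσ h
      by_cases hgx : g ∈ x
      · obtain ⟨hyσ, hgy⟩ := hBmem.mp hy1
        rcases eq_or_ne x ((B σ).sup id) with rfl | hne
        · exact absurd hgx hgy
        · rcases (HIOAux.mem_chainsIn.mp hσ).2 hx (by exact_mod_cast hBmem.mp hy1 |>.1 : ((B σ).sup id) ∈ (σ : Set (Subgroup G))) hne with h' | h'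
          · exact Or.inl (h'.trans le_sup_left)
          · exact Or.inr (sup_le h' (Subgroup.zpowers_le.mpr hgx))
      · exact Or.inl ((hy2 x (hBmem.mpr ⟨hx, hgx⟩)).trans le_sup_left)
    case isFalse h =>
      have hgx : g ∈ x := by
        by_contra hgx
        exact h ⟨x, hBmem.mpr ⟨hx, hgx⟩⟩
      exact Or.inr (Subgroup.zpowers_le.mpr hgx)
  have he3 : ∀ σ ∈ HIOAux.chainsIn A, e (σ.erase (e σ)) = e σ := by
    intro σ hσ
    refine hBe _ _ ?_
    simp only [hB, Finset.filter_erase]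
    exact Finset.erase_eq_of_notMem (fun hmem => (Finset.mem_filter.mp hmem).2 (hge σ))
  have he4 : ∀ σ ∈ HIOAux.chainsIn A, e (insert (e σ) σ) = e σ := by
    intro σ hσ
    refine hBe _ _ ?_
    simp only [hB, Finset.filter_insert, hge σ, not_true, if_neg]
    simp [hge σ]
  exact HIOAux.sum_chainsIn_eq_zero e he1 he2 he3 he4

end Stage3
section Stage4

open MulAction

/-- weighted Burnside divisibility -/
lemma burnside_dvd {N X : Type*} [Group N] [Finite N] [Fintype X] [MulAction N X]
    (F : X → ℤ) (hF : ∀ (s : N) (x : X), F (s • x) = F x) :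
    (Nat.card N : ℤ) ∣ ∑ x : X, F x * (Nat.card (MulAction.stabilizer N x) : ℤ) := by
  have hmap : ∀ x ∈ (Finset.univ : Finset X),
      (Quotient.mk (MulAction.orbitRel N X) x) ∈
        (Finset.univ : Finset (Quotient (MulAction.orbitRel N X))) := fun _ _ => Finset.mem_univ _
  rw [← Finset.sum_fiberwise_of_maps_to hmap
    (fun x => F x * (Nat.card (MulAction.stabilizer N x) : ℤ))]
  apply Finset.dvd_sum
  intro ω hω
  set x0 := ω.out with hx0
  have hiff : ∀ x : X, (Quotient.mk (MulAction.orbitRel N X) x = ω) ↔ x ∈ MulAction.orbit N x0 := by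
    intro x
    rw [← MulAction.orbitRel_apply (G := N)]
    exact Quotient.mk_eq_iff_out
  have hfix : ∀ x ∈ Finset.univ.filter
      (fun x : X => Quotient.mk (MulAction.orbitRel N X) x = ω),
      F x * (Nat.card (MulAction.stabilizer N x) : ℤ)
        = F x0 * (Nat.card (MulAction.stabilizer N x0) : ℤ) := by
    intro x hx
    rw [Finset.mem_filter] at hx
    have horb : x ∈ MulAction.orbit N x0 := (hiff x).mp hx.2
    have hrel : MulAction.orbitRel N X x x0 := MulAction.orbitRel_apply.mpr horb
    obtain ⟨s, hs⟩ := horb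
    have h1 : F x = F x0 := by rw [← hs]; exact hF s x0
    have h2 : Nat.card (MulAction.stabilizer N x) = Nat.card (MulAction.stabilizer N x0) :=
      Nat.card_congr (MulAction.stabilizerEquivStabilizerOfOrbitRel hrel).toEquiv
    rw [h1, h2]
  rw [Finset.sum_congr rfl hfix, Finset.sum_const, nsmul_eq_mul]
  have hcount : ((Finset.univ.filter
      (fun x : X => Quotient.mk (MulAction.orbitRel N X) x = ω)).card : ℤ)
        * (Nat.card (MulAction.stabilizer N x0) : ℤ) = (Nat.card N : ℤ) := by
    have h1 : (Finset.univ.filter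
        (fun x : X => Quotient.mk (MulAction.orbitRel N X) x = ω)).card
          = Nat.card (MulAction.orbit N x0) := by
      rw [← Fintype.card_subtype]
      rw [Nat.card_eq_fintype_card]
      exact Fintype.card_congr (Equiv.subtypeEquivRight hiff)
    rw [h1]
    have h2 : Nat.card (MulAction.orbit N x0) * Nat.card (MulAction.stabilizer N x0)
        = Nat.card N := by
      letI : Fintype N := Fintype.ofFinite N
      letI : Fintype (MulAction.orbit N x0) := Fintype.ofFinite _
      letI : Fintype (MulAction.stabilizer N x0) := Fintype.ofFinite _
      rw [Nat.card_eq_fintype_card, Nat.card_eq_fintype_card, Nat.card_eq_fintype_card]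
      exact MulAction.card_orbit_mul_card_stabilizer_eq_card_group N x0
    exact_mod_cast h2
  have : ((Finset.univ.filter
      (fun x : X => Quotient.mk (MulAction.orbitRel N X) x = ω)).card : ℤ)
        * (F x0 * (Nat.card (MulAction.stabilizer N x0) : ℤ))
      = F x0 * (Nat.card N : ℤ) := by
    rw [← hcount]; ring
  rw [this]
  exact Dvd.dvd.mul_left dvd_rfl (F x0)

/-- swap: the stabilizer-weighted sum equals the sum of fixed-point sums -/
lemma stab_sum_eq_fix_sum {N X : Type*} [Group N] [Fintype N] [Fintype X] [MulAction N X]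
    (F : X → ℤ) :
    ∑ x : X, F x * (Nat.card (MulAction.stabilizer N x) : ℤ)
      = ∑ s : N, ∑ x ∈ Finset.univ.filter (fun x : X => s • x = x), F x := by
  have hstab : ∀ x : X, (Nat.card (MulAction.stabilizer N x) : ℤ)
      = ((Finset.univ.filter (fun s : N => s • x = x)).card : ℤ) := by
    intro x
    congr 1
    rw [Nat.card_eq_fintype_card, ← Fintype.card_subtype]
    exact Fintype.card_congr (Equiv.subtypeEquivRight (fun s => MulAction.mem_stabilizer_iff))
  calc ∑ x : X, F x * (Nat.card (MulAction.stabilizer N x) : ℤ)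
      = ∑ x : X, ∑ s ∈ Finset.univ.filter (fun s : N => s • x = x), F x := by
        refine Finset.sum_congr rfl fun x _ => ?_
        rw [hstab x, Finset.sum_const, nsmul_eq_mul, mul_comm]
    _ = ∑ x : X, ∑ s : N, if s • x = x then F x else 0 := by
        refine Finset.sum_congr rfl fun x _ => (Finset.sum_filter _ _)
    _ = ∑ s : N, ∑ x : X, if s • x = x then F x else 0 := Finset.sum_comm
    _ = ∑ s : N, ∑ x ∈ Finset.univ.filter (fun x : X => s • x = x), F x := by
        refine Finset.sum_congr rfl fun s _ => (Finset.sum_filter _ _).symm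

end Stage4
section Stage5

variable {G : Type*} [Group G] [Finite G] [Fintype (Subgroup G)]

lemma T_chain_dvd {p k t d : ℕ}
    (hcard : Nat.card G = p ^ k * t) (hcop : Nat.Coprime p t) (hd : d ∣ t)
    (Sc : Subgroup (ConjAct G)) (hS : Nat.card Sc = p ^ k) :
    (p ^ k : ℤ) ∣ ∑ σ ∈ HIOAux.chainsIn
      (Finset.univ.filter fun H : Subgroup G => ⊥ < H ∧ Nat.card H ∣ p ^ k * d),
      (-1 : ℤ) ^ σ.card := by
  set C : Finset (Finset (Subgroup G)) := HIOAux.chainsIn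
      (Finset.univ.filter fun H : Subgroup G => ⊥ < H ∧ Nat.card H ∣ p ^ k * d) with hC
  letI : Finite (ConjAct G) := Finite.of_equiv G ConjAct.toConjAct.toEquiv
  letI : Fintype ↥Sc := Fintype.ofFinite _
  set F : Finset (Subgroup G) → ℤ := fun σ => if σ ∈ C then (-1 : ℤ) ^ σ.card else 0 with hF
  have hsmul_def : ∀ (s : ↥Sc) (σ : Finset (Subgroup G)),
      s • σ = σ.image (fun H => (↑s : ConjAct G) • H) := fun s σ => rfl
  have hCpres : ∀ (s : ↥Sc) (σ : Finset (Subgroup G)), σ ∈ C → s • σ ∈ C := by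
    intro s σ hσ
    obtain ⟨hsub, hch⟩ := HIOAux.mem_chainsIn.mp hσ
    rw [hsmul_def]
    refine HIOAux.mem_chainsIn.mpr ⟨?_, ?_⟩
    · intro K hK
      obtain ⟨H, hH, rfl⟩ := Finset.mem_image.mp hK
      have hmem := hsub hH
      simp only [Finset.mem_filter, Finset.mem_univ, true_and] at hmem ⊢
      obtain ⟨h1, h2⟩ := hmem
      constructor
      · rw [bot_lt_iff_ne_bot] at h1 ⊢
        exact fun hbe => h1 (smul_eq_bot_iff.mp hbe)
      · rw [card_smul_subgroup]; exact h2
    · intro a ha b hb hab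
      simp only [Finset.coe_image, Set.mem_image, Finset.mem_coe] at ha hb
      obtain ⟨x, hx, rfl⟩ := ha
      obtain ⟨y, hy, rfl⟩ := hb
      have hxy : x ≠ y := fun h => hab (by rw [h])
      rcases hch hx hy hxy with h | h
      · exact Or.inl (Subgroup.pointwise_smul_le_pointwise_smul_iff.mpr h)
      · exact Or.inr (Subgroup.pointwise_smul_le_pointwise_smul_iff.mpr h)
  have hCiff : ∀ (s : ↥Sc) (σ : Finset (Subgroup G)), (s • σ ∈ C ↔ σ ∈ C) := by
    intro s σ
    constructor
    · intro h
      have h2 := hCpres s⁻¹ _ h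
      rwa [inv_smul_smul] at h2
    · exact hCpres s σ
  have hFinv : ∀ (s : ↥Sc) (σ : Finset (Subgroup G)), F (s • σ) = F σ := by
    intro s σ
    by_cases h : σ ∈ C
    · simp only [hF]
      rw [if_pos ((hCiff s σ).mpr h), if_pos h, hsmul_def,
        Finset.card_image_of_injective _ (MulAction.injective (↑s : ConjAct G))]
    · simp only [hF]
      rw [if_neg (fun hc => h ((hCiff s σ).mp hc)), if_neg h]
  have hb := burnside_dvd (N := ↥Sc) (X := Finset (Subgroup G)) F hFinv
  have h1 : ∑ x ∈ Finset.univ.filter (fun σ : Finset (Subgroup G) => (1 : ↥Sc) • σ = σ), F x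
      = ∑ σ ∈ C, (-1 : ℤ) ^ σ.card := by
    have huniv : Finset.univ.filter (fun σ : Finset (Subgroup G) => (1 : ↥Sc) • σ = σ)
        = Finset.univ := by
      ext σ; simp [one_smul]
    rw [huniv]
    simp only [hF]
    rw [Finset.sum_ite_mem]
    congr 1
    exact Finset.univ_inter C
  have h0 : ∀ s : ↥Sc, s ≠ 1 →
      ∑ x ∈ Finset.univ.filter (fun σ : Finset (Subgroup G) => s • σ = σ), F x = 0 := by
    intro s hs
    have hconv : ∑ x ∈ (Finset.univ.filter (fun σ : Finset (Subgroup G) => s • σ = σ)).filter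
            (fun σ => σ ∈ C), (-1 : ℤ) ^ x.card
        = ∑ x ∈ Finset.univ.filter (fun σ : Finset (Subgroup G) => s • σ = σ), F x := by
      rw [Finset.sum_filter]
    rw [← hconv]
    have hkey : (Finset.univ.filter (fun σ : Finset (Subgroup G) => s • σ = σ)).filter
        (fun σ => σ ∈ C)
        = HIOAux.chainsIn (Finset.univ.filter fun H : Subgroup G =>
            (⊥ < H ∧ Nat.card H ∣ p ^ k * d) ∧ (↑s : ConjAct G) • H = H) := by
      ext σ
      simp only [Finset.mem_filter, Finset.mem_univ, true_and]
      constructor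
      · rintro ⟨hfix, hσC⟩
        obtain ⟨hsub, hch⟩ := HIOAux.mem_chainsIn.mp hσC
        have helem : ∀ H ∈ σ, (↑s : ConjAct G) • H = H := by
          intro H hH
          have himg : σ.image (fun K => (↑s : ConjAct G) • K) = σ := by
            rw [← hsmul_def]; exact hfix
          have hmem : (↑s : ConjAct G) • H ∈ σ := by
            rw [← himg]; exact Finset.mem_image_of_mem _ hH
          have hcardeq : Nat.card ↥((↑s : ConjAct G) • H) = Nat.card H := card_smul_subgroup _ _
          rcases eq_or_ne ((↑s : ConjAct G) • H) H with h | hne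
          · exact h
          · rcases hch hmem hH hne with h | h
            · exact Subgroup.eq_of_le_of_card_ge h (le_of_eq hcardeq.symm)
            · exact (Subgroup.eq_of_le_of_card_ge h (le_of_eq hcardeq)).symm
        refine HIOAux.mem_chainsIn.mpr ⟨?_, hch⟩
        intro K hK
        have hKA := hsub hK
        simp only [Finset.mem_filter, Finset.mem_univ, true_and] at hKA ⊢
        exact ⟨hKA, helem K hK⟩
      · intro hσ
        obtain ⟨hsub, hch⟩ := HIOAux.mem_chainsIn.mp hσ
        have hsub' : ∀ K ∈ σ, ((⊥ < K ∧ Nat.card K ∣ p ^ k * d) ∧ (↑s : ConjAct G) • K = K) := by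
          intro K hK
          have := hsub hK
          simpa using this
        constructor
        · rw [hsmul_def]
          have himg : σ.image (fun K => (↑s : ConjAct G) • K) = σ.image id :=
            Finset.image_congr (fun K hK => (hsub' K (by exact_mod_cast hK)).2)
          rw [himg, Finset.image_id]
        · refine HIOAux.mem_chainsIn.mpr ⟨?_, hch⟩
          intro K hK
          simp only [Finset.mem_filter, Finset.mem_univ, true_and]
          exact (hsub' K hK).1
    rw [hkey]
    have hc1 : (↑s : ConjAct G) ≠ 1 := by
      intro h
      exact hs (OneMemClass.coe_eq_one.mp h)
    have hco2 : Nat.card (Subgroup.zpowers (ConjAct.ofConjAct (↑s : ConjAct G))) ∣ p ^ k := by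
      rw [Nat.card_zpowers]
      have ho1 : orderOf (ConjAct.ofConjAct (↑s : ConjAct G)) = orderOf (↑s : ConjAct G) :=
        orderOf_injective ConjAct.ofConjAct.toMonoidHom (MulEquiv.injective _) _
      rw [ho1, ← hS]
      exact Subgroup.orderOf_dvd_natCard Sc s.2
    exact chi_eq_zero hcard hcop hd hc1 hco2
  have hsingle : ∑ s : ↥Sc,
      ∑ x ∈ Finset.univ.filter (fun σ : Finset (Subgroup G) => s • σ = σ), F x
      = ∑ x ∈ Finset.univ.filter (fun σ : Finset (Subgroup G) => (1 : ↥Sc) • σ = σ), F x :=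
    Fintype.sum_eq_single (1 : ↥Sc) h0
  have htotal : ∑ x : Finset (Subgroup G), F x * (Nat.card (MulAction.stabilizer ↥Sc x) : ℤ)
      = ∑ σ ∈ C, (-1 : ℤ) ^ σ.card := by
    rw [stab_sum_eq_fix_sum]
    rw [← h1, ← hsingle]
    exact Finset.sum_congr rfl fun s _ =>
      Finset.sum_congr (by ext x; simp [Finset.mem_filter]) (fun _ _ => rfl)
  rw [htotal, hS] at hb
  exact_mod_cast hb

end Stage5
section Stage6

variable {G : Type*} [Group G] [Finite G] [Fintype (Subgroup G)]

lemma mu_sum_card_dvd_eq (μ : Subgroup G → ℤ) (hbot : μ ⊥ = 1)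
    (hrec : ∀ Q : Subgroup G, Q ≠ ⊥ → ∑ H ∈ Finset.univ.filter (· ≤ Q), μ H = 0) (n : ℕ) :
    ∑ H ∈ Finset.univ.filter (fun H : Subgroup G => Nat.card H ∣ n), μ H
      = ∑ σ ∈ HIOAux.chainsIn (Finset.univ.filter fun H : Subgroup G => ⊥ < H ∧ Nat.card H ∣ n),
          (-1 : ℤ) ^ σ.card := by
  have hμν := HIOAux.mu_eq_nu μ hbot hrec
  have h1 : ∑ H ∈ Finset.univ.filter (fun H : Subgroup G => Nat.card H ∣ n), μ H
      = ∑ H ∈ Finset.univ.filter (fun H : Subgroup G => Nat.card H ∣ n), HIOAux.nu H :=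
    Finset.sum_congr rfl fun H _ => hμν H
  rw [h1]
  have hsplit : Finset.univ.filter (fun H : Subgroup G => Nat.card H ∣ n)
      = insert ⊥ (Finset.univ.filter (fun H : Subgroup G => ⊥ < H ∧ Nat.card H ∣ n)) := by
    ext H
    simp only [Finset.mem_filter, Finset.mem_univ, true_and, Finset.mem_insert]
    constructor
    · intro h
      rcases eq_or_ne H ⊥ with rfl | hne
      · exact Or.inl rfl
      · exact Or.inr ⟨bot_lt_iff_ne_bot.mpr hne, h⟩
    · rintro (rfl | ⟨-, h⟩)
      · rw [Subgroup.card_bot]; exact one_dvd n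
      · exact h
  have hbotnot : (⊥ : Subgroup G) ∉
      Finset.univ.filter (fun H : Subgroup G => ⊥ < H ∧ Nat.card H ∣ n) := by
    simp
  rw [hsplit, Finset.sum_insert hbotnot, HIOAux.nu_bot]
  set A := Finset.univ.filter (fun H : Subgroup G => ⊥ < H ∧ Nat.card H ∣ n) with hA
  have hgroup := HIOAux.sum_nu_eq A (fun H hH => (Finset.mem_filter.mp hH).2.1)
    (fun H hH K hK1 hK2 => by
      simp only [hA, Finset.mem_filter, Finset.mem_univ, true_and] at hH ⊢
      exact ⟨hK1, (Subgroup.card_dvd_of_le hK2).trans hH.2⟩)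
  rw [hgroup]
  have hsplit2 : HIOAux.chainsIn A
      = insert ∅ ((HIOAux.chainsIn A).filter (fun σ => σ.Nonempty)) := by
    ext σ
    simp only [Finset.mem_insert, Finset.mem_filter]
    constructor
    · intro h
      rcases Finset.eq_empty_or_nonempty σ with rfl | hne
      · exact Or.inl rfl
      · exact Or.inr ⟨h, hne⟩
    · rintro (rfl | ⟨h, -⟩)
      · exact HIOAux.empty_mem_chainsIn
      · exact h
  conv_rhs => rw [hsplit2]
  rw [Finset.sum_insert (by simp)]
  simp

lemma exists_Sc {p k t : ℕ} (hp : p.Prime) (hcard : Nat.card G = p ^ k * t)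
    (hcop : Nat.Coprime p t) :
    ∃ Sc : Subgroup (ConjAct G), Nat.card Sc = p ^ k := by
  haveI : Fact p.Prime := ⟨hp⟩
  letI : Finite (ConjAct G) := Finite.of_equiv G ConjAct.toConjAct.toEquiv
  obtain ⟨S⟩ := (inferInstance : Nonempty (Sylow p (ConjAct G)))
  refine ⟨S.1, ?_⟩
  have hcard' : Nat.card (ConjAct G) = p ^ k * t := by
    rw [← hcard]; exact Nat.card_congr ConjAct.ofConjAct.toEquiv
  have ht0 : t ≠ 0 := by
    intro h
    rw [h, mul_zero] at hcard
    exact Nat.card_pos.ne' hcard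
  have hfact : (Nat.card (ConjAct G)).factorization p = k := by
    rw [hcard', Nat.factorization_mul (pow_ne_zero k hp.ne_zero) ht0]
    simp [hp.factorization_pow, Finsupp.add_apply, Finsupp.single_eq_same,
      Nat.factorization_eq_zero_of_not_dvd (hp.coprime_iff_not_dvd.mp hcop)]
  have := Sylow.card_eq_multiplicity S
  rw [hfact] at this
  exact this

lemma Tdvd_mu {p k t d : ℕ} (hp : p.Prime) (hcard : Nat.card G = p ^ k * t)
    (hcop : Nat.Coprime p t) (hd : d ∣ t) (μ : Subgroup G → ℤ) (hbot : μ ⊥ = 1)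
    (hrec : ∀ Q : Subgroup G, Q ≠ ⊥ → ∑ H ∈ Finset.univ.filter (· ≤ Q), μ H = 0) :
    (p ^ k : ℤ) ∣ ∑ H ∈ Finset.univ.filter
      (fun H : Subgroup G => Nat.card H ∣ p ^ k * d), μ H := by
  obtain ⟨Sc, hSc⟩ := exists_Sc hp hcard hcop
  rw [mu_sum_card_dvd_eq μ hbot hrec]
  exact T_chain_dvd hcard hcop hd Sc hSc

lemma cond_iff_ordCompl {p k t e : ℕ} (hp : p.Prime) (hcard : Nat.card G = p ^ k * t)
    (hcop : Nat.Coprime p t) (he : e ∣ t) (H : Subgroup G) :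
    (e ∣ Nat.card H ∧ Nat.card H ∣ p ^ k * e) ↔ ordCompl[p] (Nat.card H) = e := by
  set n := Nat.card H with hn
  have hn0 : n ≠ 0 := Nat.card_pos.ne'
  have ht0 : t ≠ 0 := by
    intro h
    rw [h, mul_zero] at hcard
    exact Nat.card_pos.ne' hcard
  have he0 : e ≠ 0 := fun h => ht0 (Nat.eq_zero_of_zero_dvd (h ▸ he))
  have hnG : n ∣ p ^ k * t := by rw [← hcard, hn]; exact Subgroup.card_subgroup_dvd_card H
  have hfactkt : (p ^ k * t).factorization p = k := by
    rw [Nat.factorization_mul (pow_ne_zero k hp.ne_zero) ht0]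
    simp [hp.factorization_pow, Finsupp.add_apply, Finsupp.single_eq_same,
      Nat.factorization_eq_zero_of_not_dvd (hp.coprime_iff_not_dvd.mp hcop)]
  have hak : n.factorization p ≤ k := by
    have h1 := (Nat.factorization_le_iff_dvd hn0 (by rw [← hcard]; exact Nat.card_pos.ne')).mpr hnG
    have h2 := h1 p
    rwa [hfactkt] at h2
  have hordcompl_pke : ordCompl[p] (p ^ k * e) = e := by
    have hfe : (p ^ k * e).factorization p = k := by
      rw [Nat.factorization_mul (pow_ne_zero k hp.ne_zero) he0]
      simp [hp.factorization_pow, Finsupp.add_apply, Finsupp.single_eq_same,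
        Nat.factorization_eq_zero_of_not_dvd
          (hp.coprime_iff_not_dvd.mp (hcop.coprime_dvd_right he))]
    rw [hfe, Nat.mul_div_cancel_left _ (pow_pos hp.pos k)]
  constructor
  · rintro ⟨h1, h2⟩
    have hce : ordCompl[p] n ∣ e := by
      have := Nat.ordCompl_dvd_ordCompl_of_dvd h2 p
      rwa [hordcompl_pke] at this
    have hec : e ∣ ordCompl[p] n := by
      have hcoe : Nat.Coprime e (p ^ (n.factorization p)) :=
        Nat.Coprime.pow_right _ ((hcop.coprime_dvd_right he).symm)
      have h3 : e ∣ p ^ (n.factorization p) * ordCompl[p] n := by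
        rw [Nat.ordProj_mul_ordCompl_eq_self n p]; exact h1
      exact (Nat.Coprime.dvd_of_dvd_mul_left hcoe h3)
    exact Nat.dvd_antisymm hce hec
  · rintro rfl
    constructor
    · exact Nat.ordCompl_dvd n p
    · calc n = p ^ (n.factorization p) * ordCompl[p] n :=
            (Nat.ordProj_mul_ordCompl_eq_self n p).symm
        _ ∣ p ^ k * ordCompl[p] n := mul_dvd_mul (pow_dvd_pow p hak) dvd_rfl

lemma main_induction {p k t : ℕ} (hp : p.Prime) (hcard : Nat.card G = p ^ k * t)
    (hcop : Nat.Coprime p t) (μ : Subgroup G → ℤ) (hbot : μ ⊥ = 1)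
    (hrec : ∀ Q : Subgroup G, Q ≠ ⊥ → ∑ H ∈ Finset.univ.filter (· ≤ Q), μ H = 0) :
    ∀ m, m ∣ t → (p ^ k : ℤ) ∣ ∑ H ∈ Finset.univ.filter
      (fun H : Subgroup G => m ∣ Nat.card H ∧ Nat.card H ∣ p ^ k * m), μ H := by
  have ht0 : t ≠ 0 := by
    intro h
    rw [h, mul_zero] at hcard
    exact Nat.card_pos.ne' hcard
  intro m
  induction m using Nat.strong_induction_on with
  | _ m ih =>
    intro hm
    have hm0 : m ≠ 0 := fun h => ht0 (Nat.eq_zero_of_zero_dvd (h ▸ hm))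
    -- partition of the T(m) sum over ord_compl fibers
    have hmaps : ∀ H ∈ Finset.univ.filter
        (fun H : Subgroup G => Nat.card H ∣ p ^ k * m),
        ordCompl[p] (Nat.card H) ∈ m.divisors := by
      intro H hH
      rw [Finset.mem_filter] at hH
      rw [Nat.mem_divisors]
      refine ⟨?_, hm0⟩
      have h1 := Nat.ordCompl_dvd_ordCompl_of_dvd hH.2 p
      have h2 : ordCompl[p] (p ^ k * m) = m := by
        have hfe : (p ^ k * m).factorization p = k := by
          rw [Nat.factorization_mul (pow_ne_zero k hp.ne_zero) hm0]
          simp [hp.factorization_pow, Finsupp.add_apply, Finsupp.single_eq_same,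
            Nat.factorization_eq_zero_of_not_dvd
              (hp.coprime_iff_not_dvd.mp (hcop.coprime_dvd_right hm))]
        rw [hfe, Nat.mul_div_cancel_left _ (pow_pos hp.pos k)]
      rwa [h2] at h1
    have hpart : ∑ H ∈ Finset.univ.filter
        (fun H : Subgroup G => Nat.card H ∣ p ^ k * m), μ H
        = ∑ e ∈ m.divisors, ∑ H ∈ Finset.univ.filter
            (fun H : Subgroup G => e ∣ Nat.card H ∧ Nat.card H ∣ p ^ k * e), μ H := by
      rw [← Finset.sum_fiberwise_of_maps_to hmaps]
      refine Finset.sum_congr rfl fun e he => ?_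
      refine Finset.sum_congr ?_ (fun _ _ => rfl)
      have hedvd : e ∣ t := (Nat.mem_divisors.mp he).1.trans hm
      ext H
      simp only [Finset.mem_filter, Finset.mem_univ, true_and]
      rw [← cond_iff_ordCompl hp hcard hcop hedvd H]
      constructor
      · rintro ⟨-, h2⟩
        refine ⟨h2.1, h2.2⟩
      · rintro ⟨h1, h2⟩
        exact ⟨h2.trans (mul_dvd_mul dvd_rfl (Nat.mem_divisors.mp he).1), h1, h2⟩
    have hmmem : m ∈ m.divisors := Nat.mem_divisors_self m hm0
    have hT := Tdvd_mu hp hcard hcop hm μ hbot hrec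
    rw [hpart, ← Finset.add_sum_erase _ _ hmmem] at hT
    have hrest : (p ^ k : ℤ) ∣ ∑ e ∈ m.divisors.erase m, ∑ H ∈ Finset.univ.filter
        (fun H : Subgroup G => e ∣ Nat.card H ∧ Nat.card H ∣ p ^ k * e), μ H := by
      refine Finset.dvd_sum fun e he => ?_
      rw [Finset.mem_erase] at he
      obtain ⟨hne, hmem⟩ := he
      have hedm : e ∣ m := (Nat.mem_divisors.mp hmem).1
      have helt : e < m := lt_of_le_of_ne (Nat.le_of_dvd (Nat.pos_of_ne_zero hm0) hedm) hne
      exact ih e helt (hedm.trans hm)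
    have := dvd_sub hT hrest
    simpa using this

end Stage6
/-- Hawkes–Isaacs–Özaydin type divisibility: if `|P| = p^k·t` with `gcd(p,t)=1` and
`t' ∣ t`, then the sum of `μ(P')` over all subgroups `P'` of `P` whose order is
divisible by `t'` and divides `p^k·t'` is divisible by `p^k`. -/
theorem stmt4 (p : ℕ) (hp : p.Prime) (P : Type*) [Group P] [Finite P]
    (k t t' : ℕ) (hcard : Nat.card P = p ^ k * t) (hcop : Nat.Coprime p t) (ht' : t' ∣ t)
    (μ : Subgroup P → ℤ)
    (hμ_bot : μ ⊥ = 1)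
    (hμ_rec : ∀ Q : Subgroup P, Q ≠ ⊥ → ∑ᶠ (P' : Subgroup P) (_ : P' ≤ Q), μ P' = 0) :
    (p ^ k : ℤ) ∣
      ∑ᶠ (P' : Subgroup P) (_ : t' ∣ Nat.card P' ∧ Nat.card P' ∣ p ^ k * t'), μ P' := by
  letI : Fintype (Subgroup P) := Fintype.ofFinite _
  have hrec : ∀ Q : Subgroup P, Q ≠ ⊥ → ∑ H ∈ Finset.univ.filter (· ≤ Q), μ H = 0 := by
    intro Q hQ
    have h := hμ_rec Q hQ
    rwa [finsum_cond_eq_sum_of_cond_iff μ (t := Finset.univ.filter (· ≤ Q))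
      (fun {x} _ => by simp)] at h
  have hfin : ∑ᶠ (P' : Subgroup P) (_ : t' ∣ Nat.card P' ∧ Nat.card P' ∣ p ^ k * t'), μ P'
      = ∑ H ∈ Finset.univ.filter
          (fun H : Subgroup P => t' ∣ Nat.card H ∧ Nat.card H ∣ p ^ k * t'), μ H :=
    finsum_cond_eq_sum_of_cond_iff μ (fun {x} _ => by simp)
  rw [hfin]
  exact main_induction hp hcard hcop μ hμ_bot hrec t' ht'
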